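/- arXiv:1011.1157 — 3 statements merged into one kernel-verified Lean document; each statement's English description precedes it below -/
import Mathlib

section
/- Let B=(s_1,…,s_l) be an l-block-decomposition of a 3DT-instance of span n, and let i,j,k ∈ {1,…,n} satisfy (a) i<j<k and (b) there exists h0 with s_{h0}<i<j≤t_{h0} or s_{h0}<j<k≤t_{h0}. Then for all h∈{1,…,l}, τ_{i,j,k}^{−1}(s_h) < τ_{i,j,k}^{−1}(t_h); in particular the l-block-decomposition τ_{i,j,k}^{−1}[B] = (τ_{i,j,k}^{−1}(s_1),…,τ_{i,j,k}^{−1}(s_l)) is defined. -/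
/- ----------------------------------------------------------------------
  Common definitions for the formalization of
  "Sorting by Transpositions is Difficult" (Bulteau, Fertin, Rusu).

  Permutations of {0,…,n} are represented as functions ℕ → ℕ that are
  bijections of the set {0,…,n} (everything above n is irrelevant /
  fixed).
---------------------------------------------------------------------- -/

set_option autoImplicit false

/-- The transposition `τ_{i,j,k}`, as a function on `ℕ`
(for `0 < i < j < k ≤ n` it is a permutation of `{0,…,n}`,
fixing everything `≥ k`). Here `q = k + i - j`. -/
def tau (i j k x : ℕ) : ℕ :=
  if x < i then x
  else if x < k + i - j then x + j - i
  else if x < k then x + j - k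
  else x

/-- The inverse transposition `τ_{i,j,k}⁻¹ = τ_{i,k+i-j,k}`. -/
def tauInv (i j k x : ℕ) : ℕ := tau i (k + i - j) k x

def min3 (p q r : ℕ) : ℕ := min p (min q r)

def max3 (p q r : ℕ) : ℕ := max p (max q r)

/-- the middle value of three (pairwise distinct) values -/
def mid3 (p q r : ℕ) : ℕ := p + q + r - min3 p q r - max3 p q r

/-- The triple of positions `(p,q,r)` is *well-ordered*:
one of `p<q<r`, `q<r<p`, `r<p<q` holds. -/
def WellOrdered3 (p q r : ℕ) : Prop :=
  (p < q ∧ q < r) ∨ (q < r ∧ r < p) ∨ (r < p ∧ p < q)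

/-- The transposition `τ[a,b,c,ψ]` associated with a (well-ordered) triple
whose `ψ`-positions are `(p,q,r)`: it is `τ_{i,j,k}` for `(i,j,k)` the
sorted sequence of `(p,q,r)`. -/
def tauStep (p q r x : ℕ) : ℕ := tau (min3 p q r) (mid3 p q r) (max3 p q r) x

/-- the inverse of `τ[a,b,c,ψ]` -/
def tauInvStep (p q r x : ℕ) : ℕ := tauInv (min3 p q r) (mid3 p q r) (max3 p q r) x

/-- the number of breakpoints `d_b(π)` of `π` as a permutation of `{0,…,n}`:
the number of `x ∈ {1,…,n}` such that `(x-1,x)` is not an adjacency,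
i.e. `π x ≠ π (x-1) + 1`. -/
def db (n : ℕ) (π : ℕ → ℕ) : ℕ :=
  ((Finset.Icc 1 n).filter fun x => π x ≠ π (x - 1) + 1).card

/-- a triple `(i,j,k)` of integers coding a transposition of `{0,…,n}` -/
def IsTransp (n : ℕ) (t : ℕ × ℕ × ℕ) : Prop :=
  0 < t.1 ∧ t.1 < t.2.1 ∧ t.2.1 < t.2.2 ∧ t.2.2 ≤ n

/-- `π` can be sorted by `m` transpositions:
there are transpositions `τ_1,…,τ_m` with `π ∘ τ_m ∘ ⋯ ∘ τ_1 = Id` on `{0,…,n}`.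
(`d_t(π)` is the least such `m`.) -/
def SortsIn (n : ℕ) (π : ℕ → ℕ) (m : ℕ) : Prop :=
  ∃ L : List (ℕ × ℕ × ℕ), L.length = m ∧ (∀ t ∈ L, IsTransp n t) ∧
    ∀ x ≤ n, π (L.foldl (fun y t => tau t.1 t.2.1 t.2.2 y) x) = x

/-- the three elements of an ordered triple, as a finite set -/
def trElems {α : Type*} [DecidableEq α] (t : α × α × α) : Finset α := {t.1, t.2.1, t.2.2}

/-- A 3DT-instance `I = ⟨Σ, T, ψ⟩` of span `n`: an alphabet `Sig`,
a set `T` of ordered triples partitioning `Sig`, and an injection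
`ψ : Sig → {1,…,n}`. -/
structure TDT (α : Type*) [DecidableEq α] (n : ℕ) where
  Sig : Finset α
  T : Finset (α × α × α)
  psi : α → ℕ
  mem_T : ∀ t ∈ T, t.1 ∈ Sig ∧ t.2.1 ∈ Sig ∧ t.2.2 ∈ Sig
  cover : ∀ σ ∈ Sig, ∃ t ∈ T, σ ∈ trElems t
  nodup_T : ∀ t ∈ T, t.1 ≠ t.2.1 ∧ t.1 ≠ t.2.2 ∧ t.2.1 ≠ t.2.2
  disj_T : ∀ t ∈ T, ∀ t' ∈ T, t ≠ t' → Disjoint (trElems t) (trElems t')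
  psi_mem : ∀ σ ∈ Sig, psi σ ∈ Finset.Icc 1 n
  psi_inj : Set.InjOn psi ↑Sig

namespace TDT

variable {α : Type*} [DecidableEq α] {n : ℕ}

/-- the domain `L = ψ(Σ)` of a 3DT-instance -/
def dom (I : TDT α n) : Finset ℕ := I.Sig.image I.psi

/-- a triple of `T` is well-ordered -/
def WellOrderedT (I : TDT α n) (t : α × α × α) : Prop :=
  WellOrdered3 (I.psi t.1) (I.psi t.2.1) (I.psi t.2.2)

/-- the transposition `τ[a,b,c,ψ]` associated with a well-ordered triple -/
def tauOf (I : TDT α n) (t : α × α × α) (x : ℕ) : ℕ :=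
  tauStep (I.psi t.1) (I.psi t.2.1) (I.psi t.2.2) x

/-- the inverse of `τ[a,b,c,ψ]` -/
def tauOfInv (I : TDT α n) (t : α × α × α) (x : ℕ) : ℕ :=
  tauInvStep (I.psi t.1) (I.psi t.2.1) (I.psi t.2.2) x

end TDT

/-- a *variable*: a pair of triples `[(a,b,c),(x,y,z)]` -/
abbrev Var (α : Type*) : Type _ := (α × α × α) × (α × α × α)

section Main

variable {α : Type*} [DecidableEq α]

/-- The 3DT-step `I →(a,b,c) I'` (only defined when `(a,b,c)` is a
well-ordered triple of `T`): the triple is removed and `ψ` is composed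
with `τ[a,b,c,ψ]⁻¹`. -/
def StepT {n : ℕ} (t : α × α × α) (I I' : TDT α n) : Prop :=
  t ∈ I.T ∧ I.WellOrderedT t ∧
  I'.Sig = I.Sig \ trElems t ∧
  I'.T = I.T.erase t ∧
  ∀ σ ∈ I'.Sig, I'.psi σ = I.tauOfInv t (I.psi σ)

/-- `I` is 3DT-collapsible: some sequence of 3DT-steps reduces it to the
empty instance. -/
def Collapsible {n : ℕ} (I : TDT α n) : Prop :=
  ∃ J : TDT α n,
    Relation.ReflTransGen (fun X Y => ∃ t, StepT t X Y) I J ∧ J.Sig = ∅ ∧ J.T = ∅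

/-- `I ∼ π` : the 3DT-instance `I` (of span `n`) and the permutation `π` of
`{0,…,n}` are equivalent: `π 0 = 0`, `π v = π (v-1) + 1` for `v ∉ L`, and
`π v = π (succ_I⁻¹ v - 1) + 1` for `v ∈ L` (expressed triple by triple). -/
def EquivPerm {n : ℕ} (I : TDT α n) (π : ℕ → ℕ) : Prop :=
  π 0 = 0 ∧
  (∀ v, 1 ≤ v → v ≤ n → v ∉ I.dom → π v = π (v - 1) + 1) ∧
  ∀ t ∈ I.T,
    π (I.psi t.2.1) = π (I.psi t.1 - 1) + 1 ∧
    π (I.psi t.2.2) = π (I.psi t.2.1 - 1) + 1 ∧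
    π (I.psi t.1) = π (I.psi t.2.2 - 1) + 1

/-- `(s 1, …, s l)` is an `l`-block-decomposition of span `n` -/
def IsBlockDec (n l : ℕ) (s : ℕ → ℕ) : Prop :=
  s 1 = 0 ∧ (∀ h, 1 ≤ h → h < l → s h < s (h + 1)) ∧ s l < n

/-- `t_h`: the right end of block `h` (`t_h = s_{h+1}` for `h < l`, `t_l = n`) -/
def tEnd (n l : ℕ) (s : ℕ → ℕ) (h : ℕ) : ℕ := if h = l then n else s (h + 1)

/-- position `p` lies in block `h`, i.e. `p ∈ {s_h + 1, …, t_h}` -/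
def InBlock (n l : ℕ) (s : ℕ → ℕ) (h p : ℕ) : Prop := s h < p ∧ p ≤ tEnd n l s h

/-- a triple of `T` is *internal* (all three elements in one block) -/
def InternalT (n l : ℕ) (I : TDT α n) (s : ℕ → ℕ) (t : α × α × α) : Prop :=
  ∃ h, 1 ≤ h ∧ h ≤ l ∧ InBlock n l s h (I.psi t.1) ∧ InBlock n l s h (I.psi t.2.1) ∧
    InBlock n l s h (I.psi t.2.2)

/-- block conditions (C2)–(C3) of a variable `[(a,b,c),(x,y,z)]`:
`b,x,y` lie in the source block `h0` and `a,c,z` lie in the target block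
`h1 ≠ h0`. -/
def VarBlocksAt (n l : ℕ) (I : TDT α n) (s : ℕ → ℕ) (h0 h1 : ℕ) (a b c x y z : α) : Prop :=
  (a, b, c) ∈ I.T ∧ (x, y, z) ∈ I.T ∧
  1 ≤ h0 ∧ h0 ≤ l ∧ 1 ≤ h1 ∧ h1 ≤ l ∧ h1 ≠ h0 ∧
  InBlock n l s h0 (I.psi b) ∧ InBlock n l s h0 (I.psi x) ∧ InBlock n l s h0 (I.psi y) ∧
  InBlock n l s h1 (I.psi a) ∧ InBlock n l s h1 (I.psi c) ∧ InBlock n l s h1 (I.psi z)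

/-- the variable `[(a,b,c),(x,y,z)]` is *valid*, with source `h0` and target `h1`:
conditions (C2)–(C5). -/
def ValidVarAt (n l : ℕ) (I : TDT α n) (s : ℕ → ℕ) (h0 h1 : ℕ) (a b c x y z : α) : Prop :=
  VarBlocksAt n l I s h0 h1 a b c x y z ∧
  (I.psi x < I.psi y →
    I.psi x < I.psi b ∧ I.psi b < I.psi y ∧
      ∀ σ ∈ I.Sig, I.psi x < I.psi σ → I.psi σ < I.psi y → σ = b) ∧
  I.psi a < I.psi z ∧ I.psi z < I.psi c

/-- the variable `[(a,b,c),(x,y,z)]` is valid in the block decomposition `s` -/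
def ValidVar (n l : ℕ) (I : TDT α n) (s : ℕ → ℕ) (a b c x y z : α) : Prop :=
  ∃ h0 h1, ValidVarAt n l I s h0 h1 a b c x y z

/-- validity of a variable given as a pair of triples -/
def ValidVarV (n l : ℕ) (I : TDT α n) (s : ℕ → ℕ) (V : Var α) : Prop :=
  ValidVar n l I s V.1.1 V.1.2.1 V.1.2.2 V.2.1 V.2.2.1 V.2.2.2

/-- conditions (C2)–(C3) only, of a variable given as a pair of triples -/
def VarC23V (n l : ℕ) (I : TDT α n) (s : ℕ → ℕ) (V : Var α) : Prop :=
  ∃ h0 h1, VarBlocksAt n l I s h0 h1 V.1.1 V.1.2.1 V.1.2.2 V.2.1 V.2.2.1 V.2.2.2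

/-- the external triples of `(I,s)` are partitioned into the set `𝒜` of
variables, each satisfying the property `P`. -/
def PartitionIntoVars (n l : ℕ) (I : TDT α n) (s : ℕ → ℕ) (P : Var α → Prop)
    (𝒜 : Finset (Var α)) : Prop :=
  (∀ V ∈ 𝒜, P V) ∧
  (∀ V ∈ 𝒜, V.1 ≠ V.2) ∧
  (∀ V ∈ 𝒜, ∀ W ∈ 𝒜, V ≠ W → V.1 ≠ W.1 ∧ V.1 ≠ W.2 ∧ V.2 ≠ W.1 ∧ V.2 ≠ W.2) ∧
  (∀ V ∈ 𝒜, ¬ InternalT n l I s V.1 ∧ ¬ InternalT n l I s V.2) ∧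
  ∀ t ∈ I.T, ¬ InternalT n l I s t → ∃ V ∈ 𝒜, t = V.1 ∨ t = V.2

/-- `(I,s)` is a *valid context* -/
def ValidContext (n l : ℕ) (I : TDT α n) (s : ℕ → ℕ) : Prop :=
  IsBlockDec n l s ∧ ∃ 𝒜, PartitionIntoVars n l I s (ValidVarV n l I s) 𝒜

/-- a 3DT-step on an instance together with an `l`-block-decomposition:
`(I,B) →(t) (I',B')` with `B' = τ⁻¹[B]`. -/
def StepB (n l : ℕ) (t : α × α × α) (P P' : TDT α n × (ℕ → ℕ)) : Prop :=
  StepT t P.1 P'.1 ∧ IsBlockDec n l P'.2 ∧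
  ∀ h, 1 ≤ h → h ≤ l → P'.2 h = P.1.tauOfInv t (P.2 h)

/-- From the state `st`, the triple `v` (of some variable) can be activated,
possibly after some 3DT-steps using only the internal triples in `ints`. -/
def CanActivate (n l : ℕ) (ints : Set (α × α × α)) (v : α × α × α)
    (st : TDT α n × (ℕ → ℕ)) : Prop :=
  ∃ (m : ℕ) (c : ℕ → TDT α n × (ℕ → ℕ)) (tr : ℕ → α × α × α),
    c 0 = st ∧ (∀ p ≤ m, StepB n l (tr p) (c p) (c (p + 1))) ∧
    (∀ p < m, tr p ∈ ints) ∧ tr m = v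

/-- the block `h` of `(I,s)` reads (in increasing `ψ`-order) exactly as the
word `w`. -/
def BlockWord (n l : ℕ) (I : TDT α n) (s : ℕ → ℕ) (h : ℕ) (w : List α) : Prop :=
  w.Chain' (fun u v => I.psi u < I.psi v) ∧
  (∀ σ ∈ w, σ ∈ I.Sig ∧ InBlock n l s h (I.psi σ)) ∧
  ∀ σ ∈ I.Sig, InBlock n l s h (I.psi σ) → σ ∈ w

/-- the block `h` is the block `[A1,A2] = copy(A)`,
with word `a y1 e z d y2 x1 b1 c x2 b2 f`. -/
def IsCopyBlock (n l : ℕ) (I : TDT α n) (s : ℕ → ℕ) (h : ℕ) (A A1 A2 : Var α)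
    (d e f : α) : Prop :=
  (d, e, f) ∈ I.T ∧
  BlockWord n l I s h
    [A.1.1, A1.2.2.1, e, A.2.2.2, d, A2.2.2.1, A1.2.1, A1.1.2.1, A.1.2.2, A2.2.1, A2.1.2.1, f]

/-- the block `h` is the block `A = and(A1,A2)`,
with word `a1 e z1 a2 c1 z2 d y c2 x b f`. -/
def IsAndBlock (n l : ℕ) (I : TDT α n) (s : ℕ → ℕ) (h : ℕ) (A1 A2 A : Var α)
    (d e f : α) : Prop :=
  (d, e, f) ∈ I.T ∧
  BlockWord n l I s h
    [A1.1.1, e, A1.2.2.2, A2.1.1, A1.1.2.2, A2.2.2.2, d, A.2.2.1, A2.1.2.2, A.2.1, A.1.2.1, f]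

/-- the block `h` is the block `A = or(A1,A2)`,
with word `a1 b' z1 a2 d y a' x b f z2 c1 e c' c2`. -/
def IsOrBlock (n l : ℕ) (I : TDT α n) (s : ℕ → ℕ) (h : ℕ) (A1 A2 A : Var α)
    (a' b' c' d e f : α) : Prop :=
  (a', b', c') ∈ I.T ∧ (d, e, f) ∈ I.T ∧
  BlockWord n l I s h
    [A1.1.1, b', A1.2.2.2, A2.1.1, d, A.2.2.1, a', A.2.1, A.1.2.1, f, A2.2.2.2, A1.1.2.2, e,
      c', A2.1.2.2]

/-- the block `h` is the block `[A1,A2] = var(A)`,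
with word `d1 y1 a d2 y2 e1 a' e2 x1 b1 f1 c' z b' c x2 b2 f2`. -/
def IsVarBlock (n l : ℕ) (I : TDT α n) (s : ℕ → ℕ) (h : ℕ) (A A1 A2 : Var α)
    (d1 e1 f1 d2 e2 f2 a' b' c' : α) : Prop :=
  (d1, e1, f1) ∈ I.T ∧ (d2, e2, f2) ∈ I.T ∧ (a', b', c') ∈ I.T ∧
  BlockWord n l I s h
    [d1, A1.2.2.1, A.1.1, d2, A2.2.2.1, e1, a', e2, A1.2.1, A1.1.2.1, f1, c', A.2.2.2, b',
      A.1.2.2, A2.2.1, A2.1.2.1, f2]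

/-- `(I,s)` is an *assembling of basic blocks* over the set `𝒜` of variables:
the word representation of `I` is a concatenation of `l` blocks, each of one
of the four kinds `copy`, `and`, `or`, `var`; each variable is the input of
exactly one block and the output of exactly one other block, and `T`
consists of the internal triples of the blocks together with the triples of
the variables. -/
def IsAssembling (n l : ℕ) (I : TDT α n) (s : ℕ → ℕ) (𝒜 : Finset (Var α)) : Prop :=
  IsBlockDec n l s ∧
  (∀ V ∈ 𝒜, V.1 ∈ I.T ∧ V.2 ∈ I.T ∧ V.1 ≠ V.2) ∧
  (∀ V ∈ 𝒜, ∀ W ∈ 𝒜, V ≠ W → V.1 ≠ W.1 ∧ V.1 ≠ W.2 ∧ V.2 ≠ W.1 ∧ V.2 ≠ W.2) ∧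
  (∀ V ∈ 𝒜, ∃ h0 h1, VarBlocksAt n l I s h0 h1 V.1.1 V.1.2.1 V.1.2.2 V.2.1 V.2.2.1 V.2.2.2) ∧
  (∀ t ∈ I.T, InternalT n l I s t ∨ ∃ V ∈ 𝒜, t = V.1 ∨ t = V.2) ∧
  ∀ h, 1 ≤ h → h ≤ l →
    (∃ A ∈ 𝒜, ∃ A1 ∈ 𝒜, ∃ A2 ∈ 𝒜, ∃ d e f : α, IsCopyBlock n l I s h A A1 A2 d e f) ∨
    (∃ A ∈ 𝒜, ∃ A1 ∈ 𝒜, ∃ A2 ∈ 𝒜, ∃ d e f : α, IsAndBlock n l I s h A1 A2 A d e f) ∨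
    (∃ A ∈ 𝒜, ∃ A1 ∈ 𝒜, ∃ A2 ∈ 𝒜, ∃ a' b' c' d e f : α,
      IsOrBlock n l I s h A1 A2 A a' b' c' d e f) ∨
    (∃ A ∈ 𝒜, ∃ A1 ∈ 𝒜, ∃ A2 ∈ 𝒜, ∃ d1 e1 f1 d2 e2 f2 a' b' c' : α,
      IsVarBlock n l I s h A A1 A2 d1 e1 f1 d2 e2 f2 a' b' c')

end Main

/-- satisfiability of a boolean formula in CNF (clauses are lists of
literals; a literal is a pair (variable index, sign)) -/
def CNFSat (m : ℕ) (φ : List (List (Fin m × Bool))) : Prop :=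
  ∃ v : Fin m → Bool, ∀ C ∈ φ, ∃ p ∈ C, v p.1 = p.2

/-- Property 9 of the paper.
Let `B = (s_1,…,s_l)` be an `l`-block-decomposition of a 3DT-instance of
span `n`, and `i < j < k` in `{1,…,n}` such that for some block `h0`,
`s_{h0} < i < j ≤ t_{h0}` or `s_{h0} < j < k ≤ t_{h0}`. Then
`τ_{i,j,k}⁻¹(s_h) < τ_{i,j,k}⁻¹(t_h)` for every `h ∈ {1,…,l}`, so that the
`l`-block-decomposition `τ_{i,j,k}⁻¹[B]` is defined. -/
theorem stmt8 (n l : ℕ) (s : ℕ → ℕ) (hl : 1 ≤ l) (hbd : IsBlockDec n l s)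
    (i j k : ℕ) (hi : 1 ≤ i) (hkn : k ≤ n) (hij : i < j) (hjk : j < k)
    (h0 : ℕ) (hh01 : 1 ≤ h0) (hh0l : h0 ≤ l)
    (hcond : (s h0 < i ∧ j ≤ tEnd n l s h0) ∨ (s h0 < j ∧ k ≤ tEnd n l s h0)) :
    ∀ h, 1 ≤ h → h ≤ l → tauInv i j k (s h) < tauInv i j k (tEnd n l s h) := by
  obtain ⟨hs1, hsinc, hsl⟩ := hbd
  have smono : ∀ a b, 1 ≤ a → a ≤ b → b ≤ l → s a ≤ s b := by
    intro a b ha hab hbl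
    induction b with
    | zero => omega
    | succ m ih =>
      rcases Nat.lt_or_ge a (m + 1) with h | h
      · have h1 : s a ≤ s m := ih (by omega) (by omega)
        have h2 : s m < s (m + 1) := hsinc m (by omega) (by omega)
        omega
      · rw [show a = m + 1 from by omega]
  intro h hh1 hhl
  have hST : s h < tEnd n l s h := by
    unfold tEnd
    split_ifs with he
    · subst he; exact hsl
    · exact hsinc h hh1 (by omega)
  have hexcl : ¬(i ≤ s h ∧ s h < j ∧ j ≤ tEnd n l s h ∧ tEnd n l s h < k) := by
    rintro ⟨h1, h2, h3, h4⟩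
    rcases hcond with ⟨hc1, hc2⟩ | ⟨hc1, hc2⟩
    · -- s h0 < i ≤ s h, so h0 < h; then j ≤ t h0 = s (h0+1) ≤ s h < j
      have hh0h : h0 < h := by
        by_contra hc
        have := smono h h0 hh1 (by omega) hh0l
        omega
      have htne : h0 ≠ l := by omega
      have : tEnd n l s h0 = s (h0 + 1) := if_neg htne
      have := smono (h0 + 1) h (by omega) (by omega) hhl
      omega
    · -- k ≤ t h0 and t h < k
      rcases Nat.lt_or_ge h h0 with hlt | hge
      · -- t h = s (h+1) ≤ s h0 < j ≤ t h
        have hne : h ≠ l := by omega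
        have h5 : tEnd n l s h = s (h + 1) := if_neg hne
        have := smono (h + 1) h0 (by omega) (by omega) hh0l
        omega
      · -- h0 ≤ h, show t h0 ≤ t h
        have : tEnd n l s h0 ≤ tEnd n l s h := by
          unfold tEnd
          split_ifs with e1 e2 e3
          · omega
          · omega
          · have : s (h0 + 1) ≤ s l := smono (h0 + 1) l (by omega) (by omega) le_rfl
            omega
          · exact smono (h0 + 1) (h + 1) (by omega) (by omega) (by omega)
        omega
  unfold tauInv tau
  split_ifs <;> omega
end

section
/- Let (I,B) be a 3DT-instance with an l-block-decomposition such that the external triples of I can be partitioned into a set 𝒜 of valid variables. Let (d,e,f) be a well-ordered triple of I admitting a 3DT-step (I,B) →(d,e,f) (I′,B′), with I′=⟨Σ′,T′,ψ′⟩. Then exactly one of the following holds: (1) (d,e,f) is internal with h0 = block(d)=block(e)=block(f); then block_{I′}(σ)=block_I(σ) for all σ∈Σ′, and for σ1,σ2∈Σ′ with block_{I′}(σ1)=block_{I′}(σ2)≠h0 and σ1≺_I σ2, also σ1≺_{I′}σ2. (2) There is A=[(a,b,c),(x,y,z)]∈𝒜 with (d,e,f)=(x,y,z); then block_{I′}(b)=target(A),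 block_{I′}(σ)=block_I(σ) for all σ∈Σ′∖{b}, and for σ1,σ2∈Σ′∖{b} with σ1≺_I σ2, also σ1≺_{I′}σ2. -/
/- ----------------------------------------------------------------------
  Common definitions for the formalization of
  "Sorting by Transpositions is Difficult" (Bulteau, Fertin, Rusu).

  Permutations of {0,…,n} are represented as functions ℕ → ℕ that are
  bijections of the set {0,…,n} (everything above n is irrelevant /
  fixed).
---------------------------------------------------------------------- -/

set_option autoImplicit false

-- auxiliary lemmas for stmt10

/-- explicit piecewise form of the inverse transposition `τ_{i,j,k}⁻¹` -/
def tvAux (i j k x : ℕ) : ℕ :=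
  if x < i then x else if x < j then x + (k - j) else if x < k then x + i - j else x

lemma tauOfInv_eq {α : Type*} [DecidableEq α] {n : ℕ} (I : TDT α n) (a b c : α)
    {i j k : ℕ} (hij : i < j) (hjk : j < k)
    (h1 : min3 (I.psi a) (I.psi b) (I.psi c) = i)
    (h2 : mid3 (I.psi a) (I.psi b) (I.psi c) = j)
    (h3 : max3 (I.psi a) (I.psi b) (I.psi c) = k) :
    ∀ w, I.tauOfInv (a, b, c) w = tvAux i j k w := by
  intro w
  have e : I.tauOfInv (a, b, c) w =
      tauInv (min3 (I.psi a) (I.psi b) (I.psi c)) (mid3 (I.psi a) (I.psi b) (I.psi c))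
        (max3 (I.psi a) (I.psi b) (I.psi c)) w := rfl
  rw [e, h1, h2, h3]
  unfold tauInv tau tvAux
  split_ifs <;> omega

lemma tauOfInv_spec {α : Type*} [DecidableEq α] {n : ℕ} (I : TDT α n) (a b c : α)
    (hw : I.WellOrderedT (a, b, c)) :
    ∃ i j k, i < j ∧ j < k ∧
      ((i = I.psi a ∧ j = I.psi b ∧ k = I.psi c) ∨
       (i = I.psi b ∧ j = I.psi c ∧ k = I.psi a) ∨
       (i = I.psi c ∧ j = I.psi a ∧ k = I.psi b)) ∧
      ∀ w, I.tauOfInv (a, b, c) w = tvAux i j k w := by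
  have hw' : WellOrdered3 (I.psi a) (I.psi b) (I.psi c) := hw
  unfold WellOrdered3 at hw'
  rcases hw' with ⟨u1, u2⟩ | ⟨u1, u2⟩ | ⟨u1, u2⟩
  · exact ⟨_, _, _, u1, u2, Or.inl ⟨rfl, rfl, rfl⟩,
      tauOfInv_eq I a b c u1 u2 (by unfold min3; omega)
        (by unfold mid3 min3 max3; omega) (by unfold max3; omega)⟩
  · exact ⟨_, _, _, u1, u2, Or.inr (Or.inl ⟨rfl, rfl, rfl⟩),
      tauOfInv_eq I a b c u1 u2 (by unfold min3; omega)
        (by unfold mid3 min3 max3; omega) (by unfold max3; omega)⟩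
  · exact ⟨_, _, _, u1, u2, Or.inr (Or.inr ⟨rfl, rfl, rfl⟩),
      tauOfInv_eq I a b c u1 u2 (by unfold min3; omega)
        (by unfold mid3 min3 max3; omega) (by unfold max3; omega)⟩

lemma bd_mono {n l : ℕ} {s : ℕ → ℕ} (hbd : IsBlockDec n l s) {a b : ℕ}
    (ha : 1 ≤ a) (hab : a ≤ b) (hb : b ≤ l) : s a ≤ s b := by
  induction b, hab using Nat.le_induction with
  | base => exact le_refl _
  | succ b hab ih =>
    exact le_trans (ih (by omega)) (le_of_lt (hbd.2.1 b (by omega) (by omega)))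

lemma bd_tEnd_le {n l : ℕ} {s : ℕ → ℕ} (hbd : IsBlockDec n l s) {h h' : ℕ}
    (hh : 1 ≤ h) (hlt : h < h') (h'l : h' ≤ l) : tEnd n l s h ≤ s h' := by
  have hne : h ≠ l := by omega
  unfold tEnd
  rw [if_neg hne]
  exact bd_mono hbd (by omega) hlt h'l

/-- bundle of boundary facts used by `omega` -/
lemma bdF {n l : ℕ} {s : ℕ → ℕ} (hbd : IsBlockDec n l s) {h0 h' : ℕ}
    (hh0 : 1 ≤ h0) (hh0l : h0 ≤ l) (hh : 1 ≤ h') (hhl : h' ≤ l) :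
    (h' ≤ h0 → s h' ≤ s h0) ∧ (h0 ≤ h' → s h0 ≤ s h') ∧
    (h0 < h' → tEnd n l s h0 ≤ s h') ∧ (h' < h0 → tEnd n l s h' ≤ s h0) ∧
    s h' < tEnd n l s h' ∧ tEnd n l s h' ≤ n ∧
    (h' = l → tEnd n l s h' = n) ∧ (h' ≠ l → tEnd n l s h' = s (h' + 1)) := by
  refine ⟨fun hle => bd_mono hbd hh hle hh0l, fun hle => bd_mono hbd hh0 hle hhl,
    fun hlt => bd_tEnd_le hbd hh0 hlt hhl, fun hlt => bd_tEnd_le hbd hh hlt hh0l, ?_, ?_, ?_, ?_⟩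
  · unfold tEnd
    split_ifs with hq
    · exact lt_of_le_of_lt (bd_mono hbd hh hhl (le_refl l)) hbd.2.2
    · exact hbd.2.1 h' hh (by omega)
  · unfold tEnd
    split_ifs with hq
    · exact le_refl n
    · exact le_of_lt (lt_of_le_of_lt (bd_mono hbd (by omega) (by omega : h' + 1 ≤ l) (le_refl l)) hbd.2.2)
  · intro hq; unfold tEnd; rw [if_pos hq]
  · intro hq; unfold tEnd; rw [if_neg hq]

/-- InBlock for the transformed decomposition, in arithmetic form -/
lemma mkIB (n l : ℕ) {α : Type*} [DecidableEq α] (I : TDT α n) (s s' : ℕ → ℕ) (t : α × α × α)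
    (hsB : ∀ h, 1 ≤ h → h ≤ l → s' h = I.tauOfInv t (s h)) {i j k : ℕ}
    (hτ : ∀ w, I.tauOfInv t w = tvAux i j k w) :
    ∀ h, 1 ≤ h → h ≤ l → ∀ v, InBlock n l s' h v ↔
      (tvAux i j k (s h) < v ∧ v ≤ (if h = l then n else tvAux i j k (s (h + 1)))) := by
  intro h hh1 hh2 v
  have e1 : s' h = tvAux i j k (s h) := by rw [hsB h hh1 hh2, hτ]
  have e2 : tEnd n l s' h = (if h = l then n else tvAux i j k (s (h + 1))) := by
    unfold tEnd
    by_cases hl : h = l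
    · simp [hl]
    · simp only [if_neg hl]
      rw [hsB (h + 1) (by omega) (by omega), hτ]
  unfold InBlock
  rw [e1, e2]

set_option maxHeartbeats 4000000 in
lemma auxI1 {n l : ℕ} {s : ℕ → ℕ} (hbd : IsBlockDec n l s) {i j k h0 : ℕ}
    (hij : i < j) (hjk : j < k) (hh0 : 1 ≤ h0) (hh0l : h0 ≤ l)
    (hi : s h0 < i) (hk : k ≤ tEnd n l s h0) (p : ℕ) {h : ℕ} (hh : 1 ≤ h) (hhl : h ≤ l) :
    ((tvAux i j k (s h) < tvAux i j k p ∧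
      tvAux i j k p ≤ (if h = l then n else tvAux i j k (s (h + 1)))) ↔ InBlock n l s h p) := by
  have F0h := bdF hbd hh0 hh0l hh hhl
  have F00 := bdF hbd hh0 hh0l hh0 hh0l
  have Fc := fun hl0 : h < l => bdF hbd hh0 hh0l (h' := h + 1) (by omega) (by omega)
  unfold InBlock tvAux
  split_ifs <;> omega

set_option maxHeartbeats 4000000 in
lemma auxI2 {n l : ℕ} {s : ℕ → ℕ} (hbd : IsBlockDec n l s) {i j k h0 : ℕ}
    (hij : i < j) (hjk : j < k) (hh0 : 1 ≤ h0) (hh0l : h0 ≤ l)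
    (hi : s h0 < i) (hk : k ≤ tEnd n l s h0) {p h : ℕ} (hh : 1 ≤ h) (hhl : h ≤ l)
    (hne : h ≠ h0)
    (hin : tvAux i j k (s h) < tvAux i j k p ∧
      tvAux i j k p ≤ (if h = l then n else tvAux i j k (s (h + 1)))) :
    tvAux i j k p = p := by
  have F0h := bdF hbd hh0 hh0l hh hhl
  have F00 := bdF hbd hh0 hh0l hh0 hh0l
  have Fc := fun hl0 : h < l => bdF hbd hh0 hh0l (h' := h + 1) (by omega) (by omega)
  unfold tvAux at hin ⊢
  split_ifs at hin ⊢ <;> omega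

set_option maxHeartbeats 4000000 in
lemma auxA1 {n l : ℕ} {s : ℕ → ℕ} (hbd : IsBlockDec n l s) {i j k h0 h1 : ℕ}
    (hij : i < j) (hjk : j < k)
    (hh0 : 1 ≤ h0) (hh1 : 1 ≤ h1) (hh1l : h1 ≤ l) (h01 : h0 < h1)
    (hi : s h0 < i) (hj : j ≤ tEnd n l s h0)
    (hk1 : s h1 < k) (hk2 : k ≤ tEnd n l s h1)
    {p : ℕ} (hp : p < i ∨ (j < p ∧ p < k) ∨ k < p)
    {h : ℕ} (hh : 1 ≤ h) (hhl : h ≤ l) :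
    ((tvAux i j k (s h) < tvAux i j k p ∧
      tvAux i j k p ≤ (if h = l then n else tvAux i j k (s (h + 1)))) ↔ InBlock n l s h p) := by
  have hh0l : h0 ≤ l := le_trans (le_of_lt h01) hh1l
  have F0h := bdF hbd hh0 hh0l hh hhl
  have F1h := bdF hbd hh1 hh1l hh hhl
  have F01 := bdF hbd hh0 hh0l hh1 hh1l
  have Fc := fun hl0 : h < l =>
    And.intro (bdF hbd hh0 hh0l (h' := h + 1) (by omega) (by omega))
              (bdF hbd hh1 hh1l (h' := h + 1) (by omega) (by omega))
  unfold InBlock tvAux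
  split_ifs <;> omega

set_option maxHeartbeats 4000000 in
lemma auxA2 {n l : ℕ} {s : ℕ → ℕ} (hbd : IsBlockDec n l s) {i j k h0 h1 : ℕ}
    (hij : i < j) (hjk : j < k)
    (hh0 : 1 ≤ h0) (hh1 : 1 ≤ h1) (hh1l : h1 ≤ l) (h01 : h0 < h1)
    (hi : s h0 < i) (hj : j ≤ tEnd n l s h0)
    (hk1 : s h1 < k) (hk2 : k ≤ tEnd n l s h1)
    {p : ℕ} (hp1 : i < p) (hp2 : p < j) :
    tvAux i j k (s h1) < tvAux i j k p ∧
      tvAux i j k p ≤ (if h1 = l then n else tvAux i j k (s (h1 + 1))) := by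
  have hh0l : h0 ≤ l := le_trans (le_of_lt h01) hh1l
  have F01 := bdF hbd hh0 hh0l hh1 hh1l
  have F11 := bdF hbd hh1 hh1l hh1 hh1l
  have Fc := fun hl0 : h1 < l =>
    And.intro (bdF hbd hh0 hh0l (h' := h1 + 1) (by omega) (by omega))
              (bdF hbd hh1 hh1l (h' := h1 + 1) (by omega) (by omega))
  unfold tvAux
  split_ifs <;> omega

set_option maxHeartbeats 4000000 in
lemma auxB1 {n l : ℕ} {s : ℕ → ℕ} (hbd : IsBlockDec n l s) {i j k h0 h1 : ℕ}
    (hij : i < j) (hjk : j < k)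
    (hh1 : 1 ≤ h1) (hh0 : 1 ≤ h0) (hh0l : h0 ≤ l) (h10 : h1 < h0)
    (hi1 : s h1 < i) (hi2 : i ≤ tEnd n l s h1)
    (hj : s h0 < j) (hk : k ≤ tEnd n l s h0)
    {p : ℕ} (hp : p < i ∨ (i < p ∧ p < j) ∨ k < p)
    {h : ℕ} (hh : 1 ≤ h) (hhl : h ≤ l) :
    ((tvAux i j k (s h) < tvAux i j k p ∧
      tvAux i j k p ≤ (if h = l then n else tvAux i j k (s (h + 1)))) ↔ InBlock n l s h p) := by
  have hh1l : h1 ≤ l := le_trans (le_of_lt h10) hh0l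
  have F0h := bdF hbd hh0 hh0l hh hhl
  have F1h := bdF hbd hh1 hh1l hh hhl
  have F10 := bdF hbd hh1 hh1l hh0 hh0l
  have Fc := fun hl0 : h < l =>
    And.intro (bdF hbd hh0 hh0l (h' := h + 1) (by omega) (by omega))
              (bdF hbd hh1 hh1l (h' := h + 1) (by omega) (by omega))
  unfold InBlock tvAux
  split_ifs <;> omega

set_option maxHeartbeats 4000000 in
lemma auxB2 {n l : ℕ} {s : ℕ → ℕ} (hbd : IsBlockDec n l s) {i j k h0 h1 : ℕ}
    (hij : i < j) (hjk : j < k)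
    (hh1 : 1 ≤ h1) (hh0 : 1 ≤ h0) (hh0l : h0 ≤ l) (h10 : h1 < h0)
    (hi1 : s h1 < i) (hi2 : i ≤ tEnd n l s h1)
    (hj : s h0 < j) (hk : k ≤ tEnd n l s h0)
    {p : ℕ} (hp1 : j < p) (hp2 : p < k) :
    tvAux i j k (s h1) < tvAux i j k p ∧
      tvAux i j k p ≤ (if h1 = l then n else tvAux i j k (s (h1 + 1))) := by
  have hh1l : h1 ≤ l := le_trans (le_of_lt h10) hh0l
  have F10 := bdF hbd hh1 hh1l hh0 hh0l
  have F11 := bdF hbd hh1 hh1l hh1 hh1l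
  have F0s := bdF hbd hh0 hh0l (h' := h1 + 1) (by omega) (by omega)
  have F1s := bdF hbd hh1 hh1l (h' := h1 + 1) (by omega) (by omega)
  unfold tvAux
  split_ifs <;> omega

lemma tv_monoA {i j k p1 p2 : ℕ} (hij : i < j) (hjk : j < k)
    (r1 : p1 < i ∨ (j < p1 ∧ p1 < k) ∨ k < p1)
    (r2 : p2 < i ∨ (j < p2 ∧ p2 < k) ∨ k < p2)
    (hlt : p1 < p2) : tvAux i j k p1 < tvAux i j k p2 := by
  unfold tvAux; split_ifs <;> omega

lemma tv_monoB {i j k p1 p2 : ℕ} (hij : i < j) (hjk : j < k)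
    (r1 : p1 < i ∨ (i < p1 ∧ p1 < j) ∨ k < p1)
    (r2 : p2 < i ∨ (i < p2 ∧ p2 < j) ∨ k < p2)
    (hlt : p1 < p2) : tvAux i j k p1 < tvAux i j k p2 := by
  unfold tvAux; split_ifs <;> omega
set_option maxHeartbeats 2000000 in
/-- Property 11 of the paper.
Let `(I,B)` be a 3DT-instance with an `l`-block-decomposition whose external
triples are partitioned into a set `𝒜` of valid variables, and let
`(d,e,f)` be a well-ordered triple of `I` admitting a 3DT-step
`(I,B) →(d,e,f) (I',B')`. Then exactly one of the following holds:
(1) `(d,e,f)` is internal, in block `h0`; all remaining elements keep their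
block, and the relative order of elements in a common block `≠ h0` is kept;
(2) `(d,e,f) = (x,y,z)` for some variable `A = [(a,b,c),(x,y,z)] ∈ 𝒜`;
then `b` moves to `target(A)`, all other elements keep their block, and any
two remaining elements other than `b` keep their relative order. -/
theorem stmt10 {α : Type*} [DecidableEq α] {n : ℕ} (l : ℕ)
    (I I' : TDT α n) (s s' : ℕ → ℕ)
    (hbd : IsBlockDec n l s) (𝒜 : Finset (Var α))
    (hpart : PartitionIntoVars n l I s (ValidVarV n l I s) 𝒜)
    (d e f : α)
    (hstep : StepB n l (d, e, f) (I, s) (I', s')) :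
    Xor'
      (InternalT n l I s (d, e, f) ∧
        ∃ h0, 1 ≤ h0 ∧ h0 ≤ l ∧
          InBlock n l s h0 (I.psi d) ∧ InBlock n l s h0 (I.psi e) ∧
          InBlock n l s h0 (I.psi f) ∧
          (∀ σ ∈ I'.Sig, ∀ h, 1 ≤ h → h ≤ l →
            (InBlock n l s' h (I'.psi σ) ↔ InBlock n l s h (I.psi σ))) ∧
          (∀ σ1 ∈ I'.Sig, ∀ σ2 ∈ I'.Sig, ∀ h, 1 ≤ h → h ≤ l → h ≠ h0 →
            InBlock n l s' h (I'.psi σ1) → InBlock n l s' h (I'.psi σ2) →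
            I.psi σ1 < I.psi σ2 → I'.psi σ1 < I'.psi σ2))
      (∃ V ∈ 𝒜, (d, e, f) = V.2 ∧
        (∃ h1, 1 ≤ h1 ∧ h1 ≤ l ∧
          InBlock n l s h1 (I.psi V.1.1) ∧ InBlock n l s h1 (I.psi V.1.2.2) ∧
          InBlock n l s h1 (I.psi V.2.2.2) ∧
          InBlock n l s' h1 (I'.psi V.1.2.1)) ∧
        (∀ σ ∈ I'.Sig, σ ≠ V.1.2.1 → ∀ h, 1 ≤ h → h ≤ l →
          (InBlock n l s' h (I'.psi σ) ↔ InBlock n l s h (I.psi σ))) ∧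
        (∀ σ1 ∈ I'.Sig, ∀ σ2 ∈ I'.Sig, σ1 ≠ V.1.2.1 → σ2 ≠ V.1.2.1 →
          I.psi σ1 < I.psi σ2 → I'.psi σ1 < I'.psi σ2)) := by
  obtain ⟨hstepT, hbd', hsB⟩ := hstep
  obtain ⟨hmemT, hwo, hSig, hT, hpsi'⟩ := hstepT
  have hsB2 : ∀ h, 1 ≤ h → h ≤ l → s' h = I.tauOfInv (d, e, f) (s h) := hsB
  have hpsi2 : ∀ σ ∈ I'.Sig, I'.psi σ = I.tauOfInv (d, e, f) (I.psi σ) := hpsi'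
  have hSig2 : I'.Sig = I.Sig \ trElems (d, e, f) := hSig
  have hwo2 : I.WellOrderedT (d, e, f) := hwo
  have hmem2 : (d, e, f) ∈ I.T := hmemT
  obtain ⟨hvalA, hneV, hdisjV, hnintV, hcovV⟩ := hpart
  unfold Xor'
  by_cases hint : InternalT n l I s (d, e, f)
  · refine Or.inl ⟨⟨hint, ?_⟩, ?_⟩
    · obtain ⟨h0, hh0, hh0l, hbd_, hbe, hbf⟩ := id hint
      obtain ⟨i, j, k, hij, hjk, hpat, hτ⟩ := tauOfInv_spec I d e f hwo2
      have hik : s h0 < i ∧ k ≤ tEnd n l s h0 := by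
        have h1 : s h0 < I.psi d ∧ I.psi d ≤ tEnd n l s h0 := hbd_
        have h2 : s h0 < I.psi e ∧ I.psi e ≤ tEnd n l s h0 := hbe
        have h3 : s h0 < I.psi f ∧ I.psi f ≤ tEnd n l s h0 := hbf
        rcases hpat with ⟨e1, e2, e3⟩ | ⟨e1, e2, e3⟩ | ⟨e1, e2, e3⟩ <;> subst e1 <;> subst e2 <;>
          subst e3 <;> exact ⟨by omega, by omega⟩
      have hIB := mkIB n l I s s' (d, e, f) hsB2 hτ
      refine ⟨h0, hh0, hh0l, hbd_, hbe, hbf, ?_, ?_⟩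
      · intro σ hσ h hh1 hh2
        rw [hIB h hh1 hh2, hpsi2 σ hσ, hτ]
        exact auxI1 hbd hij hjk hh0 hh0l hik.1 hik.2 (I.psi σ) hh1 hh2
      · intro σ1 hσ1 σ2 hσ2 h hh1 hh2 hneh hB1 hB2 hlt
        rw [hIB h hh1 hh2, hpsi2 σ1 hσ1, hτ] at hB1
        rw [hIB h hh1 hh2, hpsi2 σ2 hσ2, hτ] at hB2
        have e1 := auxI2 hbd hij hjk hh0 hh0l hik.1 hik.2 hh1 hh2 hneh hB1
        have e2 := auxI2 hbd hij hjk hh0 hh0l hik.1 hik.2 hh1 hh2 hneh hB2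
        rw [hpsi2 σ1 hσ1, hpsi2 σ2 hσ2, hτ (I.psi σ1), hτ (I.psi σ2), e1, e2]
        exact hlt
    · rintro ⟨V, hV, hdef, -⟩
      exact (hnintV V hV).2 (hdef ▸ hint)
  · refine Or.inr ⟨?_, fun hcon => hint hcon.1⟩
    obtain ⟨V, hV, hor⟩ := hcovV (d, e, f) hmem2 hint
    obtain ⟨⟨a, b, c⟩, x, y, z⟩ := V
    have hval : ValidVar n l I s a b c x y z := hvalA _ hV
    obtain ⟨h0, h1, hVB, hC4, haz, hzc⟩ := hval
    obtain ⟨hT1, hT2, hh0, hh0l, hh1, hh1l, hne01, hbB, hxB, hyB, haB, hcB, hzB⟩ := hVB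
    have hwo3 : WellOrdered3 (I.psi d) (I.psi e) (I.psi f) := hwo2
    unfold WellOrdered3 at hwo3
    rcases hor with hor | hor
    · exfalso
      simp only [Prod.mk.injEq] at hor
      obtain ⟨rfl, rfl, rfl⟩ := hor
      have hb' : s h0 < I.psi e ∧ I.psi e ≤ tEnd n l s h0 := hbB
      have ha' : s h1 < I.psi d ∧ I.psi d ≤ tEnd n l s h1 := haB
      have hc' : s h1 < I.psi f ∧ I.psi f ≤ tEnd n l s h1 := hcB
      rcases lt_or_gt_of_ne hne01 with hlt | hlt
      · have h2 := bd_tEnd_le hbd hh1 hlt hh0l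
        omega
      · have h2 := bd_tEnd_le hbd hh0 hlt hh1l
        omega
    · simp only [Prod.mk.injEq] at hor
      obtain ⟨rfl, rfl, rfl⟩ := hor
      have hb' : s h0 < I.psi b ∧ I.psi b ≤ tEnd n l s h0 := hbB
      have hx' : s h0 < I.psi d ∧ I.psi d ≤ tEnd n l s h0 := hxB
      have hy' : s h0 < I.psi e ∧ I.psi e ≤ tEnd n l s h0 := hyB
      have hz' : s h1 < I.psi f ∧ I.psi f ≤ tEnd n l s h1 := hzB
      have hbS : b ∈ I.Sig := (I.mem_T _ hT1).2.1
      have hdS : d ∈ I.Sig := (I.mem_T _ hT2).1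
      have heS : e ∈ I.Sig := (I.mem_T _ hT2).2.1
      have hfS : f ∈ I.Sig := (I.mem_T _ hT2).2.2
      have hVne : ((a, b, c) : α × α × α) ≠ (d, e, f) := hneV _ hV
      have hdisj := I.disj_T _ hT1 _ hT2 hVne
      have hbnot : b ∉ trElems ((d, e, f) : α × α × α) :=
        fun hmem => (Finset.disjoint_left.mp hdisj (by simp [trElems])) hmem
      have hbS' : b ∈ I'.Sig := by
        rw [hSig2]; exact Finset.mem_sdiff.mpr ⟨hbS, hbnot⟩
      have hregpre : ∀ σ, σ ∈ I'.Sig → σ ≠ b →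
          I.psi σ ≠ I.psi d ∧ I.psi σ ≠ I.psi e ∧ I.psi σ ≠ I.psi f ∧ σ ∈ I.Sig := by
        intro σ hσ hnb
        have hσ2 := hσ
        rw [hSig2] at hσ2
        obtain ⟨hσS, hσn⟩ := Finset.mem_sdiff.mp hσ2
        refine ⟨?_, ?_, ?_, hσS⟩
        · intro hh
          exact hσn (by
            have hq : σ = d := I.psi_inj (Finset.mem_coe.mpr hσS) (Finset.mem_coe.mpr hdS) hh
            rw [hq]; simp [trElems])
        · intro hh
          exact hσn (by
            have hq : σ = e := I.psi_inj (Finset.mem_coe.mpr hσS) (Finset.mem_coe.mpr heS) hh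
            rw [hq]; simp [trElems])
        · intro hh
          exact hσn (by
            have hq : σ = f := I.psi_inj (Finset.mem_coe.mpr hσS) (Finset.mem_coe.mpr hfS) hh
            rw [hq]; simp [trElems])
      rcases lt_or_gt_of_ne hne01 with hlt | hlt
      · -- case B : h1 < h0, positions ψf < ψd < ψe
        have hten := bd_tEnd_le hbd hh1 hlt hh0l
        have hord : I.psi f < I.psi d ∧ I.psi d < I.psi e := by omega
        obtain ⟨hxb, hby, huniq⟩ := hC4 hord.2
        have hτ : ∀ w, I.tauOfInv (d, e, f) w = tvAux (I.psi f) (I.psi d) (I.psi e) w :=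
          tauOfInv_eq I d e f hord.1 hord.2 (by unfold min3; omega)
            (by unfold mid3 min3 max3; omega) (by unfold max3; omega)
        have hIB := mkIB n l I s s' (d, e, f) hsB2 hτ
        have hreg : ∀ σ, σ ∈ I'.Sig → σ ≠ b →
            (I.psi σ < I.psi f ∨ (I.psi f < I.psi σ ∧ I.psi σ < I.psi d) ∨
              I.psi e < I.psi σ) := by
          intro σ hσ hnb
          obtain ⟨u1, u2, u3, u4⟩ := hregpre σ hσ hnb
          have u5 : ¬(I.psi d < I.psi σ ∧ I.psi σ < I.psi e) := fun hu => hnb (huniq σ u4 hu.1 hu.2)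
          omega
        refine ⟨((a, b, c), (d, e, f)), hV, rfl, ⟨h1, hh1, hh1l, haB, hcB, hzB, ?_⟩, ?_, ?_⟩
        · rw [hpsi2 b hbS', hτ, hIB h1 hh1 hh1l]
          exact auxB2 hbd hord.1 hord.2 hh1 hh0 hh0l hlt hz'.1 hz'.2 hx'.1 hy'.2 hxb hby
        · intro σ hσ hnb h hh1' hh2'
          rw [hpsi2 σ hσ, hτ, hIB h hh1' hh2']
          exact auxB1 hbd hord.1 hord.2 hh1 hh0 hh0l hlt hz'.1 hz'.2 hx'.1 hy'.2
            (hreg σ hσ hnb) hh1' hh2'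
        · intro σ1 hσ1 σ2 hσ2 hnb1 hnb2 hlt'
          rw [hpsi2 σ1 hσ1, hpsi2 σ2 hσ2, hτ, hτ]
          exact tv_monoB hord.1 hord.2 (hreg σ1 hσ1 hnb1) (hreg σ2 hσ2 hnb2) hlt'
      · -- case A : h0 < h1, positions ψd < ψe < ψf
        have hten := bd_tEnd_le hbd hh0 hlt hh1l
        have hord : I.psi d < I.psi e ∧ I.psi e < I.psi f := by omega
        obtain ⟨hxb, hby, huniq⟩ := hC4 hord.1
        have hτ : ∀ w, I.tauOfInv (d, e, f) w = tvAux (I.psi d) (I.psi e) (I.psi f) w :=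
          tauOfInv_eq I d e f hord.1 hord.2 (by unfold min3; omega)
            (by unfold mid3 min3 max3; omega) (by unfold max3; omega)
        have hIB := mkIB n l I s s' (d, e, f) hsB2 hτ
        have hreg : ∀ σ, σ ∈ I'.Sig → σ ≠ b →
            (I.psi σ < I.psi d ∨ (I.psi e < I.psi σ ∧ I.psi σ < I.psi f) ∨
              I.psi f < I.psi σ) := by
          intro σ hσ hnb
          obtain ⟨u1, u2, u3, u4⟩ := hregpre σ hσ hnb
          have u5 : ¬(I.psi d < I.psi σ ∧ I.psi σ < I.psi e) := fun hu => hnb (huniq σ u4 hu.1 hu.2)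
          omega
        refine ⟨((a, b, c), (d, e, f)), hV, rfl, ⟨h1, hh1, hh1l, haB, hcB, hzB, ?_⟩, ?_, ?_⟩
        · rw [hpsi2 b hbS', hτ, hIB h1 hh1 hh1l]
          exact auxA2 hbd hord.1 hord.2 hh0 hh1 hh1l hlt hx'.1 hy'.2 hz'.1 hz'.2 hxb hby
        · intro σ hσ hnb h hh1' hh2'
          rw [hpsi2 σ hσ, hτ, hIB h hh1' hh2']
          exact auxA1 hbd hord.1 hord.2 hh0 hh1 hh1l hlt hx'.1 hy'.2 hz'.1 hz'.2
            (hreg σ hσ hnb) hh1' hh2'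
        · intro σ1 hσ1 σ2 hσ2 hnb1 hnb2 hlt'
          rw [hpsi2 σ1 hσ1, hpsi2 σ2 hσ2, hτ, hτ]
          exact tv_monoA hord.1 hord.2 (hreg σ1 hσ1 hnb1) (hreg σ2 hσ2 hnb2) hlt'
end

section
/- Let (I,B) be a valid context and (I,B) →(d,e,f) (I′,B′) a 3DT-step. Then the external triples of (I′,B′) can be partitioned into a set of variables each of which satisfies the two block conditions of validity: its elements b,x,y lie in a common block (the source) and its elements a,c,z lie in a common block (the target) distinct from the source. -/
/- ----------------------------------------------------------------------
  Common definitions for the formalization of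
  "Sorting by Transpositions is Difficult" (Bulteau, Fertin, Rusu).

  Permutations of {0,…,n} are represented as functions ℕ → ℕ that are
  bijections of the set {0,…,n} (everything above n is irrelevant /
  fixed).
---------------------------------------------------------------------- -/

set_option autoImplicit false

section MyHelpers
lemma tauInv_eval (i j k x : ℕ) (hij : i < j) (hjk : j < k) :
    tauInv i j k x =
      if x < i then x else if x < j then x + (k - j)
      else if x < k then x - (j - i) else x := by
  unfold tauInv tau
  split_ifs <;> omega

lemma tauInvStep_eval (p q r : ℕ) (h1 : p < q) (h2 : q < r) (x : ℕ) :
    tauInvStep p q r x = tauInv p q r x := by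
  have e1 : min3 p q r = p := by unfold min3; omega
  have e2 : max3 p q r = r := by unfold max3; omega
  have e3 : mid3 p q r = q := by unfold mid3; rw [e1, e2]; omega
  unfold tauInvStep
  rw [e1, e2, e3]

lemma tauInvStep_cyc (p q r x : ℕ) : tauInvStep p q r x = tauInvStep q r p x := by
  have e1 : min3 p q r = min3 q r p := by unfold min3; omega
  have e2 : max3 p q r = max3 q r p := by unfold max3; omega
  have e3 : mid3 p q r = mid3 q r p := by unfold mid3 min3 max3; omega
  unfold tauInvStep
  rw [e1, e2, e3]

lemma tauInv_le_low {i j k : ℕ} (hij : i < j) (hjk : j < k) (p q : ℕ)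
    (hp : p < i ∨ j ≤ p) (hq : q < i ∨ j ≤ q) :
    tauInv i j k p ≤ tauInv i j k q ↔ p ≤ q := by
  rw [tauInv_eval i j k p hij hjk, tauInv_eval i j k q hij hjk]
  split_ifs <;> omega

lemma tauInv_le_high {i j k : ℕ} (hij : i < j) (hjk : j < k) (p q : ℕ)
    (hp : p < j ∨ k ≤ p) (hq : q < j ∨ k ≤ q) :
    tauInv i j k p ≤ tauInv i j k q ↔ p ≤ q := by
  rw [tauInv_eval i j k p hij hjk, tauInv_eval i j k q hij hjk]
  split_ifs <;> omega

lemma InBlock_def {n l : ℕ} {s : ℕ → ℕ} {h p : ℕ} :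
    InBlock n l s h p ↔ s h < p ∧ p ≤ tEnd n l s h := Iff.rfl

lemma sMono {n l : ℕ} {s : ℕ → ℕ} (hbd : IsBlockDec n l s) (h h' : ℕ)
    (h1 : 1 ≤ h) (hle : h ≤ h') (hl : h' ≤ l) : s h ≤ s h' := by
  obtain ⟨-, hmono, -⟩ := hbd
  have key : ∀ dl hh, 1 ≤ hh → hh + dl ≤ l → s hh ≤ s (hh + dl) := by
    intro dl
    induction dl with
    | zero => intro hh _ _; exact le_rfl
    | succ m ih =>
      intro hh a b
      have h2 := ih hh a (by omega)
      have h3 := hmono (hh + m) (by omega) (by omega)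
      calc s hh ≤ s (hh + m) := h2
        _ ≤ s (hh + m + 1) := le_of_lt h3
  have e : h' = h + (h' - h) := by omega
  rw [e]
  exact key (h' - h) h h1 (by omega)

lemma block_disj {n l : ℕ} {s : ℕ → ℕ} (hbd : IsBlockDec n l s)
    {h h' p : ℕ} (hh1 : 1 ≤ h) (hhl : h ≤ l) (hh1' : 1 ≤ h') (hhl' : h' ≤ l)
    (hne : h ≠ h') (hp : InBlock n l s h p) (hp' : InBlock n l s h' p) : False := by
  have hgen : ∀ g g' : ℕ, 1 ≤ g → g < g' → g' ≤ l →
      InBlock n l s g p → InBlock n l s g' p → False := by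
    intro g g' hg1 hgg hgl hq hq'
    rw [InBlock_def] at hq hq'
    have hmono := sMono hbd (g+1) g' (by omega) (by omega) (by omega)
    have htg : tEnd n l s g = s (g+1) := by unfold tEnd; rw [if_neg (by omega)]
    omega
  rcases Nat.lt_or_ge h h' with hc | hc
  · exact hgen h h' hh1 hc hhl' hp hp'
  · exact hgen h' h hh1' (by omega) hhl hp' hp

lemma transfer_block {n l : ℕ} {s s' : ℕ → ℕ} (φ : ℕ → ℕ)
    (hφn : φ n = n)
    (hs' : ∀ h, 1 ≤ h → h ≤ l → s' h = φ (s h))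
    (E : ℕ → Prop)
    (hE : ∀ p q, E p → E q → (φ p ≤ φ q ↔ p ≤ q))
    (hsE : ∀ h, 1 ≤ h → h ≤ l → E (s h)) (hnE : E n) :
    ∀ h, 1 ≤ h → h ≤ l → ∀ p, E p →
      (InBlock n l s h p ↔ InBlock n l s' h (φ p)) := by
  intro h h1 h2 p hp
  have hEt : E (tEnd n l s h) := by
    unfold tEnd; split_ifs with hh
    · exact hnE
    · exact hsE (h+1) (by omega) (by omega)
  have ht : tEnd n l s' h = φ (tEnd n l s h) := by
    unfold tEnd; split_ifs with hh
    · exact hφn.symm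
    · exact hs' (h+1) (by omega) (by omega)
  rw [InBlock_def, InBlock_def, hs' h h1 h2, ht]
  constructor
  · rintro ⟨u, v⟩
    refine ⟨?_, (hE p _ hp hEt).mpr v⟩
    by_contra w
    push_neg at w
    have := (hE p (s h) hp (hsE h h1 h2)).mp w
    omega
  · rintro ⟨u, v⟩
    refine ⟨?_, (hE p _ hp hEt).mp v⟩
    by_contra w
    push_neg at w
    have := (hE p (s h) hp (hsE h h1 h2)).mpr w
    omega
end MyHelpers

/-- Property 12 of the paper.
Let `(I,B)` be a valid context and `(I,B) →(d,e,f) (I',B')` a 3DT-step.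
Then the external triples of `(I',B')` can be partitioned into a set of
variables, each satisfying the two block conditions (C2)–(C3) of validity. -/
theorem stmt11 {α : Type*} [DecidableEq α] {n : ℕ} (l : ℕ)
    (I I' : TDT α n) (s s' : ℕ → ℕ)
    (hvc : ValidContext n l I s)
    (d e f : α)
    (hstep : StepB n l (d, e, f) (I, s) (I', s')) :
    ∃ 𝒜' : Finset (Var α), PartitionIntoVars n l I' s' (VarC23V n l I' s') 𝒜' := by
  classical
  have hvc' : IsBlockDec n l s ∧ ∃ 𝒜 : Finset (Var α),
      (∀ V ∈ 𝒜, ValidVarV n l I s V) ∧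
      (∀ V ∈ 𝒜, V.1 ≠ V.2) ∧
      (∀ V ∈ 𝒜, ∀ W ∈ 𝒜, V ≠ W → V.1 ≠ W.1 ∧ V.1 ≠ W.2 ∧ V.2 ≠ W.1 ∧ V.2 ≠ W.2) ∧
      (∀ V ∈ 𝒜, ¬ InternalT n l I s V.1 ∧ ¬ InternalT n l I s V.2) ∧
      ∀ t ∈ I.T, ¬ InternalT n l I s t → ∃ V ∈ 𝒜, t = V.1 ∨ t = V.2 := hvc
  obtain ⟨hbd, 𝒜, hP, hneA, hdistA, hextA, hcovA⟩ := hvc'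
  have hstep' : ((d,e,f) ∈ I.T ∧ I.WellOrderedT (d,e,f) ∧
      I'.Sig = I.Sig \ trElems (d,e,f) ∧
      I'.T = I.T.erase (d,e,f) ∧
      ∀ σ ∈ I'.Sig, I'.psi σ = I.tauOfInv (d,e,f) (I.psi σ)) ∧
      IsBlockDec n l s' ∧
      ∀ h, 1 ≤ h → h ≤ l → s' h = I.tauOfInv (d,e,f) (s h) := hstep
  obtain ⟨⟨hdT, hwo, hSigeq, hTeq, hpsiφ⟩, hbd', hs'φ⟩ := hstep'
  have hwo' : (I.psi d < I.psi e ∧ I.psi e < I.psi f) ∨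
      (I.psi e < I.psi f ∧ I.psi f < I.psi d) ∨
      (I.psi f < I.psi d ∧ I.psi d < I.psi e) := hwo
  have hφstep : ∀ w, I.tauOfInv (d,e,f) w = tauInvStep (I.psi d) (I.psi e) (I.psi f) w :=
    fun _ => rfl
  obtain ⟨hdS, heS, hfS⟩ := I.mem_T _ hdT
  by_cases hint : InternalT n l I s (d, e, f)
  · -- internal case
    obtain ⟨g, hg1, hgl, hBd, hBe, hBf⟩ := id hint
    have hijk : ∃ i j k, i < j ∧ j < k ∧ (∀ w, I.tauOfInv (d,e,f) w = tauInv i j k w) ∧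
        InBlock n l s g i ∧ InBlock n l s g j ∧ InBlock n l s g k := by
      rcases hwo' with ⟨u1, u2⟩ | ⟨u1, u2⟩ | ⟨u1, u2⟩
      · exact ⟨_, _, _, u1, u2,
          fun w => (hφstep w).trans (tauInvStep_eval _ _ _ u1 u2 w), hBd, hBe, hBf⟩
      · exact ⟨_, _, _, u1, u2,
          fun w => (hφstep w).trans ((tauInvStep_cyc _ _ _ w).trans
            (tauInvStep_eval _ _ _ u1 u2 w)), hBe, hBf, hBd⟩
      · exact ⟨_, _, _, u1, u2,
          fun w => (hφstep w).trans (((tauInvStep_cyc _ _ _ w).trans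
            (tauInvStep_cyc _ _ _ w)).trans (tauInvStep_eval _ _ _ u1 u2 w)), hBf, hBd, hBe⟩
    obtain ⟨i, j, k, hij, hjk, hφeq, hBi, hBj, hBk⟩ := hijk
    rw [InBlock_def] at hBi hBj hBk
    have hsfix : ∀ h, 1 ≤ h → h ≤ l → I.tauOfInv (d,e,f) (s h) = s h := by
      intro h hh1 hhl
      have hx : s h < i ∨ k ≤ s h := by
        rcases le_or_gt h g with hc | hc
        · have := sMono hbd h g hh1 hc hgl
          left; omega
        · have h2 := sMono hbd (g+1) h (by omega) (by omega) hhl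
          have htg : tEnd n l s g = s (g+1) := by unfold tEnd; rw [if_neg (by omega)]
          right; omega
      rw [hφeq, tauInv_eval i j k _ hij hjk]
      split_ifs <;> omega
    have hs'fix : ∀ h, 1 ≤ h → h ≤ l → s' h = s h :=
      fun h a b => (hs'φ h a b).trans (hsfix h a b)
    have htEnd : ∀ h, 1 ≤ h → h ≤ l → tEnd n l s' h = tEnd n l s h := by
      intro h hh1 hhl
      unfold tEnd
      split_ifs with hc
      · rfl
      · exact hs'fix (h+1) (by omega) (by omega)
    have hkey : ∀ h, 1 ≤ h → h ≤ l → ∀ p,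
        (InBlock n l s h p ↔ InBlock n l s' h (I.tauOfInv (d,e,f) p)) := by
      intro h hh1 hhl p
      rw [InBlock_def, InBlock_def, hs'fix h hh1 hhl, htEnd h hh1 hhl, hφeq,
        tauInv_eval i j k p hij hjk]
      rcases lt_trichotomy h g with hc | hc | hc
      · have h2 : tEnd n l s h = s (h+1) := by unfold tEnd; rw [if_neg (by omega)]
        have h3 := sMono hbd (h+1) g (by omega) (by omega) hgl
        have h4 : s g < i := hBi.1
        rw [h2]
        split_ifs <;> omega
      · subst hc
        have h4 : s h < i := hBi.1
        have h5 : k ≤ tEnd n l s h := hBk.2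
        split_ifs <;> omega
      · have h2 := sMono hbd (g+1) h (by omega) (by omega) hhl
        have htg : tEnd n l s g = s (g+1) := by unfold tEnd; rw [if_neg (by omega)]
        have h5 : k ≤ tEnd n l s g := hBk.2
        split_ifs <;> omega
    have hIntIff : ∀ t ∈ I'.T, (InternalT n l I s t ↔ InternalT n l I' s' t) := by
      intro t htT'
      obtain ⟨h1S, h2S, h3S⟩ := I'.mem_T t htT'
      have e1 := hpsiφ _ h1S
      have e2 := hpsiφ _ h2S
      have e3 := hpsiφ _ h3S
      unfold InternalT
      constructor
      · rintro ⟨h, a1, a2, b1, b2, b3⟩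
        exact ⟨h, a1, a2, by rw [e1]; exact (hkey h a1 a2 _).mp b1,
          by rw [e2]; exact (hkey h a1 a2 _).mp b2,
          by rw [e3]; exact (hkey h a1 a2 _).mp b3⟩
      · rintro ⟨h, a1, a2, b1, b2, b3⟩
        rw [e1] at b1; rw [e2] at b2; rw [e3] at b3
        exact ⟨h, a1, a2, (hkey h a1 a2 _).mpr b1, (hkey h a1 a2 _).mpr b2,
          (hkey h a1 a2 _).mpr b3⟩
    have hWdat : ∀ W ∈ 𝒜, W.1 ∈ I'.T ∧ W.2 ∈ I'.T ∧ VarC23V n l I' s' W := by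
      intro W hW
      have hWext := hextA W hW
      have hW1ne : W.1 ≠ (d, e, f) := fun hq => hWext.1 (by rw [hq]; exact hint)
      have hW2ne : W.2 ≠ (d, e, f) := fun hq => hWext.2 (by rw [hq]; exact hint)
      have hPW := hP W hW
      unfold ValidVarV ValidVar ValidVarAt VarBlocksAt at hPW
      obtain ⟨h0, h1, ⟨hW1T, hW2T, c1, c2, c3, c4, c5, B1, B2, B3, B4, B5, B6⟩, -, -, -⟩ := hPW
      have hW1T' : W.1 ∈ I'.T := by rw [hTeq]; exact Finset.mem_erase.mpr ⟨hW1ne, hW1T⟩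
      have hW2T' : W.2 ∈ I'.T := by rw [hTeq]; exact Finset.mem_erase.mpr ⟨hW2ne, hW2T⟩
      refine ⟨hW1T', hW2T', ?_⟩
      have hd1 := I.disj_T _ hW1T _ hdT hW1ne
      have hd2 := I.disj_T _ hW2T _ hdT hW2ne
      have hmem' : ∀ σ : α, (σ ∈ trElems W.1 ∨ σ ∈ trElems W.2) → σ ∈ I.Sig → σ ∈ I'.Sig := by
        intro σ hσ hσS
        rw [hSigeq, Finset.mem_sdiff]
        refine ⟨hσS, fun hc => ?_⟩
        rcases hσ with hh | hh
        · exact Finset.disjoint_left.mp hd1 hh hc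
        · exact Finset.disjoint_left.mp hd2 hh hc
      obtain ⟨m1, m2, m3⟩ := I.mem_T _ hW1T
      obtain ⟨m4, m5, m6⟩ := I.mem_T _ hW2T
      have s1 : W.1.1 ∈ I'.Sig := hmem' _ (Or.inl (by simp [trElems])) m1
      have s2 : W.1.2.1 ∈ I'.Sig := hmem' _ (Or.inl (by simp [trElems])) m2
      have s3 : W.1.2.2 ∈ I'.Sig := hmem' _ (Or.inl (by simp [trElems])) m3
      have s4 : W.2.1 ∈ I'.Sig := hmem' _ (Or.inr (by simp [trElems])) m4
      have s5 : W.2.2.1 ∈ I'.Sig := hmem' _ (Or.inr (by simp [trElems])) m5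
      have s6 : W.2.2.2 ∈ I'.Sig := hmem' _ (Or.inr (by simp [trElems])) m6
      unfold VarC23V VarBlocksAt
      refine ⟨h0, h1, hW1T', hW2T', c1, c2, c3, c4, c5, ?_, ?_, ?_, ?_, ?_, ?_⟩
      · rw [hpsiφ _ s2]; exact (hkey h0 c1 c2 _).mp B1
      · rw [hpsiφ _ s4]; exact (hkey h0 c1 c2 _).mp B2
      · rw [hpsiφ _ s5]; exact (hkey h0 c1 c2 _).mp B3
      · rw [hpsiφ _ s1]; exact (hkey h1 c3 c4 _).mp B4
      · rw [hpsiφ _ s3]; exact (hkey h1 c3 c4 _).mp B5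
      · rw [hpsiφ _ s6]; exact (hkey h1 c3 c4 _).mp B6
    refine ⟨𝒜, ?_⟩
    unfold PartitionIntoVars
    refine ⟨fun W hW => (hWdat W hW).2.2, hneA, hdistA, ?_, ?_⟩
    · intro W hW
      have hWext := hextA W hW
      exact ⟨fun hc => hWext.1 ((hIntIff W.1 (hWdat W hW).1).mpr hc),
        fun hc => hWext.2 ((hIntIff W.2 (hWdat W hW).2.1).mpr hc)⟩
    · intro t htT' hnint'
      have htT'' := htT'
      rw [hTeq] at htT''
      have ht2 := Finset.mem_erase.mp htT''
      have hnint : ¬ InternalT n l I s t := fun hc => hnint' ((hIntIff t htT').mp hc)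
      exact hcovA t ht2.2 hnint
  · -- external case
    obtain ⟨V, hV, hVeq⟩ := hcovA (d,e,f) hdT hint
    obtain ⟨⟨a, b, c⟩, x, y, z⟩ := V
    have hPV := hP _ hV
    unfold ValidVarV ValidVar ValidVarAt VarBlocksAt at hPV
    dsimp only at hPV
    obtain ⟨h0, h1, ⟨habcT, hxyzT, hh01, hh0l, hh11, hh1l, hh10, Bb, Bx, By, Ba, Bc, Bz⟩,
      hC4, hC5a, hC5b⟩ := hPV
    obtain ⟨haS, hbS, hcS⟩ := I.mem_T _ habcT
    obtain ⟨hxS, hyS, hzS⟩ := I.mem_T _ hxyzT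
    dsimp only at haS hbS hcS hxS hyS hzS
    have Bb' : s h0 < I.psi b ∧ I.psi b ≤ tEnd n l s h0 := Bb
    have Bx' : s h0 < I.psi x ∧ I.psi x ≤ tEnd n l s h0 := Bx
    have By' : s h0 < I.psi y ∧ I.psi y ≤ tEnd n l s h0 := By
    have Ba' : s h1 < I.psi a ∧ I.psi a ≤ tEnd n l s h1 := Ba
    have Bc' : s h1 < I.psi c ∧ I.psi c ≤ tEnd n l s h1 := Bc
    have Bz' : s h1 < I.psi z ∧ I.psi z ≤ tEnd n l s h1 := Bz
    have hVeq2 : (d, e, f) = ((x, y, z) : α × α × α) := by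
      rcases hVeq with hq | hq
      · exfalso
        simp only [Prod.mk.injEq] at hq
        obtain ⟨h1d, h1e, h1f⟩ := hq
        rw [h1d, h1e, h1f] at hwo'
        rcases hwo' with ⟨u1, u2⟩ | ⟨u1, u2⟩ | ⟨u1, u2⟩
        · refine block_disj hbd hh11 hh1l hh01 hh0l hh10 ?_ Bb
          rw [InBlock_def]
          exact ⟨by omega, by omega⟩
        · omega
        · omega
      · exact hq
    rw [hVeq2] at hSigeq hTeq hpsiφ hs'φ hint hdT
    have hwoX : I.WellOrderedT (x,y,z) := by rw [← hVeq2]; exact hwo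
    have hwo2 : (I.psi x < I.psi y ∧ I.psi y < I.psi z) ∨
        (I.psi y < I.psi z ∧ I.psi z < I.psi x) ∨
        (I.psi z < I.psi x ∧ I.psi x < I.psi y) := hwoX
    have hφstep2 : ∀ w, I.tauOfInv (x,y,z) w = tauInvStep (I.psi x) (I.psi y) (I.psi z) w :=
      fun _ => rfl
    have hV12 : ((a,b,c) : α×α×α) ≠ ((x,y,z) : α×α×α) := hneA _ hV
    have hdisjV := I.disj_T _ habcT _ hxyzT hV12
    have hxy : I.psi x < I.psi y := by
      rcases hwo2 with u | u | u
      · exact u.1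
      · exfalso
        obtain ⟨u1, u2⟩ := u
        refine block_disj hbd hh01 hh0l hh11 hh1l (Ne.symm hh10) ?_ Bz
        rw [InBlock_def]
        exact ⟨by omega, by omega⟩
      · exact u.2
    obtain ⟨hxb, hby, huniq⟩ := hC4 hxy
    have hsE : ∀ h, 1 ≤ h → h ≤ l → (s h < I.psi x ∨ I.psi y ≤ s h) := by
      intro h a2 b2
      rcases le_or_gt h h0 with hc | hc
      · have := sMono hbd h h0 a2 hc hh0l
        left; omega
      · have h2 := sMono hbd (h0+1) h (by omega) (by omega) b2
        have h3 : tEnd n l s h0 = s (h0+1) := by unfold tEnd; rw [if_neg (by omega)]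
        right; omega
    have hpyn : I.psi y ≤ n := by
      have := I.psi_mem y hyS
      rw [Finset.mem_Icc] at this
      exact this.2
    have hpzn : I.psi z ≤ n := by
      have := I.psi_mem z hzS
      rw [Finset.mem_Icc] at this
      exact this.2
    have hnE : (n < I.psi x ∨ I.psi y ≤ n) := Or.inr hpyn
    have hkeys : (∀ h, 1 ≤ h → h ≤ l → ∀ p, (p < I.psi x ∨ I.psi y ≤ p) →
          (InBlock n l s h p ↔ InBlock n l s' h (I.tauOfInv (x,y,z) p))) ∧
        InBlock n l s' h1 (I.tauOfInv (x,y,z) (I.psi b)) := by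
      rcases hwo2 with u | u | u
      · -- subcase A : px < py < pz
        obtain ⟨u1, u2⟩ := u
        have hφeq : ∀ w, I.tauOfInv (x,y,z) w = tauInv (I.psi x) (I.psi y) (I.psi z) w :=
          fun w => (hφstep2 w).trans (tauInvStep_eval _ _ _ u1 u2 w)
        have h01lt : h0 < h1 := by
          rcases Nat.lt_or_ge h0 h1 with hc | hc
          · exact hc
          · exfalso
            have h2 := sMono hbd (h1+1) h0 (by omega) (by omega) hh0l
            have h3 : tEnd n l s h1 = s (h1+1) := by unfold tEnd; rw [if_neg (by omega)]
            omega
        have hsh1low : I.psi y ≤ s h1 := by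
          have h2 := sMono hbd (h0+1) h1 (by omega) (by omega) hh1l
          have h3 : tEnd n l s h0 = s (h0+1) := by unfold tEnd; rw [if_neg (by omega)]
          omega
        have hφn : I.tauOfInv (x,y,z) n = n := by
          rw [hφeq, tauInv_eval _ _ _ _ u1 u2]
          split_ifs <;> omega
        constructor
        · exact transfer_block _ hφn hs'φ (fun p => p < I.psi x ∨ I.psi y ≤ p)
            (fun p q hp hq => by rw [hφeq, hφeq]; exact tauInv_le_low u1 u2 p q hp hq)
            hsE hnE
        · rw [InBlock_def]
          have e1 : s' h1 = s h1 - (I.psi y - I.psi x) := by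
            rw [hs'φ h1 hh11 hh1l, hφeq, tauInv_eval _ _ _ _ u1 u2]
            split_ifs <;> omega
          have e2 : tEnd n l s' h1 = tEnd n l s h1 := by
            unfold tEnd
            split_ifs with hc
            · rfl
            · rw [hs'φ (h1+1) (by omega) (by omega), hφeq, tauInv_eval _ _ _ _ u1 u2]
              have h3 : tEnd n l s h1 = s (h1+1) := by unfold tEnd; rw [if_neg hc]
              split_ifs <;> omega
          have e3 : I.tauOfInv (x,y,z) (I.psi b) = I.psi b + (I.psi z - I.psi y) := by
            rw [hφeq, tauInv_eval _ _ _ _ u1 u2]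
            split_ifs <;> omega
          rw [e1, e2, e3]
          constructor
          · omega
          · omega
      · exfalso
        omega
      · -- subcase B : pz < px < py
        obtain ⟨u1, u2⟩ := u
        have hφeq : ∀ w, I.tauOfInv (x,y,z) w = tauInv (I.psi z) (I.psi x) (I.psi y) w :=
          fun w => (hφstep2 w).trans ((tauInvStep_cyc _ _ _ w).trans
            ((tauInvStep_cyc _ _ _ w).trans (tauInvStep_eval _ _ _ u1 u2 w)))
        have h10lt : h1 < h0 := by
          rcases Nat.lt_or_ge h1 h0 with hc | hc
          · exact hc
          · exfalso
            have h2 := sMono hbd (h0+1) h1 (by omega) (by omega) hh1l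
            have h3 : tEnd n l s h0 = s (h0+1) := by unfold tEnd; rw [if_neg (by omega)]
            omega
        have hth1 : tEnd n l s h1 = s (h1+1) := by unfold tEnd; rw [if_neg (by omega)]
        have hsh1hi : s (h1+1) < I.psi x := by
          have h2 := sMono hbd (h1+1) h0 (by omega) (by omega) hh0l
          omega
        have hφn : I.tauOfInv (x,y,z) n = n := by
          rw [hφeq, tauInv_eval _ _ _ _ u1 u2]
          split_ifs <;> omega
        constructor
        · exact transfer_block _ hφn hs'φ (fun p => p < I.psi x ∨ I.psi y ≤ p)
            (fun p q hp hq => by rw [hφeq, hφeq]; exact tauInv_le_high u1 u2 p q hp hq)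
            hsE hnE
        · rw [InBlock_def]
          have e1 : s' h1 = s h1 := by
            rw [hs'φ h1 hh11 hh1l, hφeq, tauInv_eval _ _ _ _ u1 u2]
            split_ifs <;> omega
          have e2 : tEnd n l s' h1 = s (h1+1) + (I.psi y - I.psi x) := by
            unfold tEnd
            split_ifs with hc
            · omega
            · rw [hs'φ (h1+1) (by omega) (by omega), hφeq, tauInv_eval _ _ _ _ u1 u2]
              split_ifs <;> omega
          have e3 : I.tauOfInv (x,y,z) (I.psi b) = I.psi b - (I.psi x - I.psi z) := by
            rw [hφeq, tauInv_eval _ _ _ _ u1 u2]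
            split_ifs <;> omega
          rw [e1, e2, e3]
          constructor
          · omega
          · omega
    obtain ⟨key1, key2⟩ := hkeys
    have hEnotb : ∀ σ ∈ I.Sig, σ ≠ x → σ ≠ b → (I.psi σ < I.psi x ∨ I.psi y ≤ I.psi σ) := by
      intro σ hσ hσx hσb
      by_contra hc
      push_neg at hc
      rcases Nat.eq_or_lt_of_le hc.1 with he | he
      · exact hσx (I.psi_inj (Finset.mem_coe.mpr hσ) (Finset.mem_coe.mpr hxS) he.symm)
      · exact hσb (huniq σ hσ he hc.2)
    have hnotinV : ∀ σ : α, σ ∈ trElems ((a,b,c) : α×α×α) → σ ∉ trElems ((x,y,z) : α×α×α) :=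
      fun σ hσ1 hσ2 => Finset.disjoint_left.mp hdisjV hσ1 hσ2
    have hax : a ≠ x := fun hq => hnotinV a (by simp [trElems]) (by rw [hq]; simp [trElems])
    have hcx : c ≠ x := fun hq => hnotinV c (by simp [trElems]) (by rw [hq]; simp [trElems])
    have hnd := I.nodup_T _ habcT
    dsimp only at hnd
    have hab : a ≠ b := hnd.1
    have hcb : c ≠ b := fun hq => hnd.2.2 hq.symm
    have hEa := hEnotb a haS hax hab
    have hEc := hEnotb c hcS hcx hcb
    have haS' : a ∈ I'.Sig := by
      rw [hSigeq, Finset.mem_sdiff]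
      exact ⟨haS, hnotinV a (by simp [trElems])⟩
    have hbS' : b ∈ I'.Sig := by
      rw [hSigeq, Finset.mem_sdiff]
      exact ⟨hbS, hnotinV b (by simp [trElems])⟩
    have hcS' : c ∈ I'.Sig := by
      rw [hSigeq, Finset.mem_sdiff]
      exact ⟨hcS, hnotinV c (by simp [trElems])⟩
    have hIntV1 : InternalT n l I' s' (a, b, c) := by
      unfold InternalT
      refine ⟨h1, hh11, hh1l, ?_, ?_, ?_⟩
      · rw [show I'.psi ((a,b,c) : α×α×α).1 = I'.psi a from rfl, hpsiφ a haS']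
        exact (key1 h1 hh11 hh1l _ hEa).mp Ba
      · rw [show I'.psi ((a,b,c) : α×α×α).2.1 = I'.psi b from rfl, hpsiφ b hbS']
        exact key2
      · rw [show I'.psi ((a,b,c) : α×α×α).2.2 = I'.psi c from rfl, hpsiφ c hcS']
        exact (key1 h1 hh11 hh1l _ hEc).mp Bc
    have hTrip : ∀ t ∈ I.T, t ≠ ((a,b,c) : α×α×α) → t ≠ ((x,y,z) : α×α×α) →
        (t ∈ I'.T ∧ (InternalT n l I s t ↔ InternalT n l I' s' t)) := by
      intro t htT hta htx
      have ht' : t ∈ I'.T := by rw [hTeq]; exact Finset.mem_erase.mpr ⟨htx, htT⟩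
      obtain ⟨m1, m2, m3⟩ := I.mem_T t htT
      have hd1 := I.disj_T t htT _ habcT hta
      have hd2 := I.disj_T t htT _ hxyzT htx
      have hel : ∀ σ : α, σ ∈ trElems t → σ ∈ I.Sig →
          σ ∈ I'.Sig ∧ (I.psi σ < I.psi x ∨ I.psi y ≤ I.psi σ) := by
        intro σ hσ hσS
        have hσ' : σ ∈ I'.Sig := by
          rw [hSigeq, Finset.mem_sdiff]
          exact ⟨hσS, fun hc => Finset.disjoint_left.mp hd2 hσ hc⟩
        refine ⟨hσ', ?_⟩
        refine hEnotb σ hσS ?_ ?_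
        · intro hq
          exact Finset.disjoint_left.mp hd2 hσ (by rw [hq]; simp [trElems])
        · intro hq
          exact Finset.disjoint_left.mp hd1 hσ (by rw [hq]; simp [trElems])
      have e1 := hel t.1 (by simp [trElems]) m1
      have e2 := hel t.2.1 (by simp [trElems]) m2
      have e3 := hel t.2.2 (by simp [trElems]) m3
      refine ⟨ht', ?_⟩
      unfold InternalT
      constructor
      · rintro ⟨g, g1, gl, w1, w2, w3⟩
        exact ⟨g, g1, gl, by rw [hpsiφ _ e1.1]; exact (key1 g g1 gl _ e1.2).mp w1,
          by rw [hpsiφ _ e2.1]; exact (key1 g g1 gl _ e2.2).mp w2,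
          by rw [hpsiφ _ e3.1]; exact (key1 g g1 gl _ e3.2).mp w3⟩
      · rintro ⟨g, g1, gl, w1, w2, w3⟩
        rw [hpsiφ _ e1.1] at w1
        rw [hpsiφ _ e2.1] at w2
        rw [hpsiφ _ e3.1] at w3
        exact ⟨g, g1, gl, (key1 g g1 gl _ e1.2).mpr w1, (key1 g g1 gl _ e2.2).mpr w2,
          (key1 g g1 gl _ e3.2).mpr w3⟩
    refine ⟨𝒜.erase ((a,b,c),(x,y,z)), ?_⟩
    unfold PartitionIntoVars
    refine ⟨?_, ?_, ?_, ?_, ?_⟩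
    · intro W hW'
      obtain ⟨hWne, hW𝒜⟩ := Finset.mem_erase.mp hW'
      have hPW := hP W hW𝒜
      unfold ValidVarV ValidVar ValidVarAt VarBlocksAt at hPW
      obtain ⟨g0, g1, ⟨hW1T, hW2T, d1, d2, d3, d4, d5, C1, C2, C3, C4', C5', C6'⟩, -, -, -⟩ := hPW
      obtain ⟨ne11, ne12, ne21, ne22⟩ := hdistA W hW𝒜 _ hV hWne
      have hd1 := I.disj_T _ hW1T _ habcT ne11
      have hd2 := I.disj_T _ hW1T _ hxyzT ne12
      have hd3 := I.disj_T _ hW2T _ habcT ne21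
      have hd4 := I.disj_T _ hW2T _ hxyzT ne22
      have htp : ∀ σ : α, (σ ∈ trElems W.1 ∨ σ ∈ trElems W.2) → σ ∈ I.Sig →
          σ ∈ I'.Sig ∧ (I.psi σ < I.psi x ∨ I.psi y ≤ I.psi σ) := by
        intro σ hσt hσS
        have hnx : σ ∉ trElems ((x,y,z) : α×α×α) := by
          rcases hσt with hh | hh
          · exact fun hc => Finset.disjoint_left.mp hd2 hh hc
          · exact fun hc => Finset.disjoint_left.mp hd4 hh hc
        have hnabc : σ ∉ trElems ((a,b,c) : α×α×α) := by
          rcases hσt with hh | hh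
          · exact fun hc => Finset.disjoint_left.mp hd1 hh hc
          · exact fun hc => Finset.disjoint_left.mp hd3 hh hc
        refine ⟨by rw [hSigeq, Finset.mem_sdiff]; exact ⟨hσS, hnx⟩, ?_⟩
        exact hEnotb σ hσS (fun hq => hnx (by rw [hq]; simp [trElems]))
          (fun hq => hnabc (by rw [hq]; simp [trElems]))
      obtain ⟨m1, m2, m3⟩ := I.mem_T _ hW1T
      obtain ⟨m4, m5, m6⟩ := I.mem_T _ hW2T
      have t1 := htp W.1.1 (Or.inl (by simp [trElems])) m1
      have t2 := htp W.1.2.1 (Or.inl (by simp [trElems])) m2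
      have t3 := htp W.1.2.2 (Or.inl (by simp [trElems])) m3
      have t4 := htp W.2.1 (Or.inr (by simp [trElems])) m4
      have t5 := htp W.2.2.1 (Or.inr (by simp [trElems])) m5
      have t6 := htp W.2.2.2 (Or.inr (by simp [trElems])) m6
      unfold VarC23V VarBlocksAt
      refine ⟨g0, g1, ?_, ?_, d1, d2, d3, d4, d5, ?_, ?_, ?_, ?_, ?_, ?_⟩
      · rw [hTeq]; exact Finset.mem_erase.mpr ⟨ne12, hW1T⟩
      · rw [hTeq]; exact Finset.mem_erase.mpr ⟨ne22, hW2T⟩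
      · rw [hpsiφ _ t2.1]; exact (key1 g0 d1 d2 _ t2.2).mp C1
      · rw [hpsiφ _ t4.1]; exact (key1 g0 d1 d2 _ t4.2).mp C2
      · rw [hpsiφ _ t5.1]; exact (key1 g0 d1 d2 _ t5.2).mp C3
      · rw [hpsiφ _ t1.1]; exact (key1 g1 d3 d4 _ t1.2).mp C4'
      · rw [hpsiφ _ t3.1]; exact (key1 g1 d3 d4 _ t3.2).mp C5'
      · rw [hpsiφ _ t6.1]; exact (key1 g1 d3 d4 _ t6.2).mp C6'
    · intro W hW'
      exact hneA W (Finset.mem_erase.mp hW').2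
    · intro V' hV' W' hW''
      exact hdistA V' (Finset.mem_erase.mp hV').2 W' (Finset.mem_erase.mp hW'').2
    · intro W hW'
      obtain ⟨hWne, hW𝒜⟩ := Finset.mem_erase.mp hW'
      have hPW := hP W hW𝒜
      unfold ValidVarV ValidVar ValidVarAt VarBlocksAt at hPW
      obtain ⟨g0, g1, ⟨hW1T, hW2T, -⟩, -, -, -⟩ := hPW
      obtain ⟨ne11, ne12, ne21, ne22⟩ := hdistA W hW𝒜 _ hV hWne
      have hWext := hextA W hW𝒜
      exact ⟨fun hc => hWext.1 ((hTrip W.1 hW1T ne11 ne12).2.mpr hc),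
        fun hc => hWext.2 ((hTrip W.2 hW2T ne21 ne22).2.mpr hc)⟩
    · intro t htT' hnint'
      have htT'' := htT'
      rw [hTeq] at htT''
      obtain ⟨htx, htT⟩ := Finset.mem_erase.mp htT''
      have hta : t ≠ ((a,b,c) : α×α×α) := by
        rintro rfl
        exact hnint' hIntV1
      have htr := hTrip t htT hta htx
      have hnint : ¬ InternalT n l I s t := fun hc => hnint' (htr.2.mp hc)
      obtain ⟨W, hW, hWeq⟩ := hcovA t htT hnint
      refine ⟨W, Finset.mem_erase.mpr ⟨?_, hW⟩, hWeq⟩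
      rintro rfl
      rcases hWeq with hq | hq
      · exact hta hq
      · exact htx hq
end
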